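/- arXiv:1307.6396 — 5 statements merged into one kernel-verified Lean document; each statement's English description precedes it below -/
import Mathlib

section
/- Let λ be a regular uncountable cardinal and α < λ⁺. Let ⟨u^i_α : i < λ⟩ be a continuously increasing sequence of subsets of α, each of cardinality less than λ, with union α, where 'continuously increasing' means u^j_α = ⋃_{i<j} u^i_α for limit j. Fix such systems for all β ≤ α simultaneously. Then the set D_α = {i < λ : for all β ∈ u^i_α, u^i_β = u^i_α ∩ β} is a closed unbounded subset of λ. -/
open Cardinal Set

/-- `C` is a closed unbounded subset of (the ordinals below) `lam`:
it consists of ordinals `< lam`, is unbounded in `lam`, and contains every nonzero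
ordinal `< lam` which is a limit of its elements. -/
def IsClubInOrd (lam : Ordinal) (C : Set Ordinal) : Prop :=
  C ⊆ Set.Iio lam ∧
  (∀ a < lam, ∃ b ∈ C, a ≤ b) ∧
  ∀ o < lam, o ≠ 0 → (∀ b < o, ∃ c ∈ C, b < c ∧ c < o) → o ∈ C

/-- A small (relative to a regular cardinal `lam`) set of ordinals mapped below `lam.ord`
admits a strict bound below `lam.ord`. -/
lemma aux_bound (lam : Cardinal.{0}) (hreg : lam.IsRegular)
    (S : Set Ordinal.{0}) (hS : #S < Cardinal.lift.{1} lam)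
    (g : Ordinal.{0} → Ordinal.{0}) (hg : ∀ s ∈ S, g s < lam.ord) :
    ∃ j < lam.ord, ∀ s ∈ S, g s < j := by
  obtain ⟨c, hclt, hc⟩ := Cardinal.lt_lift_iff.mp hS
  have hmk : #(ULift.{1, 0} c.out) = #S := by
    rw [Cardinal.mk_uLift, Cardinal.mk_out]; exact hc
  obtain ⟨e⟩ := Cardinal.eq.mp hmk
  set f : c.out → Ordinal := fun x => g ((e ⟨x⟩ : S) : Ordinal) with hf
  have hflt : ∀ x, f x < lam.ord := fun x => hg _ (e ⟨x⟩).2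
  have hbdd : BddAbove (Set.range f) := ⟨lam.ord, by rintro _ ⟨x, rfl⟩; exact (hflt x).le⟩
  have hsup : (⨆ x, f x) < lam.ord :=
    Cardinal.iSup_lt_ord_of_isRegular hreg (by rwa [Cardinal.mk_out]) hflt
  refine ⟨(⨆ x, f x) + 1, ?_, ?_⟩
  · rw [Ordinal.add_one_eq_succ]
    exact (Cardinal.isSuccLimit_ord hreg.aleph0_le).succ_lt hsup
  · intro s hs
    have : g s ≤ ⨆ x, f x := by
      have hx : f ((e.symm ⟨s, hs⟩).down) = g s := by
        show g ((e (e.symm ⟨s, hs⟩) : S) : Ordinal) = g s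
        rw [Equiv.apply_symm_apply]
      calc g s = f ((e.symm ⟨s, hs⟩).down) := hx.symm
        _ ≤ ⨆ x, f x := le_ciSup hbdd _
    rw [Ordinal.add_one_eq_succ]
    exact Order.lt_succ_of_le this

/-- Let `λ` be a regular uncountable cardinal and `a < λ⁺`.  Suppose that for every
`β ≤ a` we have a continuously increasing sequence `⟨u β i : i < λ⟩` of subsets of `β`
(i.e. of `Set.Iio β`), each of cardinality `< λ`, with union `β`.  Then
`D_a = {i < λ : ∀ β ∈ u a i, u β i = u a i ∩ β}` is a closed unbounded subset of `λ`. -/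
theorem stmt4 (lam : Cardinal.{0}) (hreg : lam.IsRegular) (hunc : ℵ₀ < lam)
    (a : Ordinal.{0}) (ha : a < (Order.succ lam).ord)
    (u : Ordinal.{0} → Ordinal.{0} → Set Ordinal.{0})
    (hsub : ∀ β ≤ a, ∀ i < lam.ord, u β i ⊆ Set.Iio β)
    (hcard : ∀ β ≤ a, ∀ i < lam.ord, #(u β i) < Cardinal.lift.{1} lam)
    (hmono : ∀ β ≤ a, ∀ i j : Ordinal, i ≤ j → j < lam.ord → u β i ⊆ u β j)
    (hcont : ∀ β ≤ a, ∀ j < lam.ord, Order.IsSuccLimit j → u β j = ⋃ i ∈ Set.Iio j, u β i)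
    (hunion : ∀ β ≤ a, ⋃ i ∈ Set.Iio lam.ord, u β i = Set.Iio β) :
    IsClubInOrd lam.ord
      {i | i < lam.ord ∧ ∀ β ∈ u a i, u β i = u a i ∩ Set.Iio β} := by
  have hlimord : Order.IsSuccLimit lam.ord := Cardinal.isSuccLimit_ord hreg.aleph0_le
  -- covering lemma
  have cover : ∀ β ≤ a, ∀ S : Set Ordinal, S ⊆ Set.Iio β →
      Cardinal.mk S < Cardinal.lift.{1} lam → ∃ j < lam.ord, S ⊆ u β j := by
    intro β hβ S hSsub hScard
    have hex : ∀ s : Ordinal, ∃ j, s ∈ S → j < lam.ord ∧ s ∈ u β j := by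
      intro s
      by_cases hs : s ∈ S
      · have hmem : s ∈ ⋃ i ∈ Set.Iio lam.ord, u β i := by rw [hunion β hβ]; exact hSsub hs
        simp only [Set.mem_iUnion, Set.mem_Iio] at hmem
        obtain ⟨j, hj, hj2⟩ := hmem
        exact ⟨j, fun _ => ⟨hj, hj2⟩⟩
      · exact ⟨0, fun h => absurd h hs⟩
    choose g hg using hex
    obtain ⟨j, hj, hgj⟩ := aux_bound lam hreg S hScard g (fun s hs => (hg s hs).1)
    exact ⟨j, hj, fun s hs => hmono β hβ (g s) j (hgj s hs).le hj (hg s hs).2⟩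
  -- the one-step extension
  have step : ∀ i, ∃ j, i < lam.ord →
      i < j ∧ j < lam.ord ∧
        ∀ β ∈ u a i, u β i ⊆ u a j ∧ u a i ∩ Set.Iio β ⊆ u β j := by
    intro i
    by_cases hi : i < lam.ord
    · have hper : ∀ β, ∃ jb, β ∈ u a i →
          jb < lam.ord ∧ u β i ⊆ u a jb ∧ u a i ∩ Set.Iio β ⊆ u β jb := by
        intro β
        by_cases hβ : β ∈ u a i
        · have hβa : β < a := hsub a le_rfl i hi hβ
          obtain ⟨j₁, hj₁, hj₁s⟩ := cover a le_rfl (u β i)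
            (fun γ hγ => lt_trans (hsub β hβa.le i hi hγ) hβa) (hcard β hβa.le i hi)
          obtain ⟨j₂, hj₂, hj₂s⟩ := cover β hβa.le (u a i ∩ Set.Iio β)
            Set.inter_subset_right
            (lt_of_le_of_lt (Cardinal.mk_le_mk_of_subset Set.inter_subset_left)
              (hcard a le_rfl i hi))
          refine ⟨max j₁ j₂, fun _ => ⟨max_lt hj₁ hj₂, ?_, ?_⟩⟩
          · exact fun γ hγ => hmono a le_rfl j₁ _ (le_max_left _ _) (max_lt hj₁ hj₂) (hj₁s hγ)
          · exact fun γ hγ => hmono β hβa.le j₂ _ (le_max_right _ _) (max_lt hj₁ hj₂) (hj₂s hγ)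
        · exact ⟨0, fun h => absurd h hβ⟩
      choose g hg using hper
      obtain ⟨J, hJ, hgJ⟩ := aux_bound lam hreg (u a i) (hcard a le_rfl i hi) g
        (fun β hβ => (hg β hβ).1)
      have hsucc : i + 1 < lam.ord := by
        rw [Ordinal.add_one_eq_succ]; exact hlimord.succ_lt hi
      refine ⟨max J (i + 1), fun _ => ⟨?_, max_lt hJ hsucc, ?_⟩⟩
      · calc i < i + 1 := by rw [Ordinal.add_one_eq_succ]; exact Order.lt_succ i
          _ ≤ max J (i + 1) := le_max_right _ _
      · intro β hβ
        have hgle : g β ≤ max J (i + 1) := ((hgJ β hβ).le).trans (le_max_left _ _)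
        have hβa : β < a := hsub a le_rfl i hi hβ
        constructor
        · exact fun γ hγ =>
            hmono a le_rfl (g β) _ hgle (max_lt hJ hsucc) ((hg β hβ).2.1 hγ)
        · exact fun γ hγ =>
            hmono β hβa.le (g β) _ hgle (max_lt hJ hsucc) ((hg β hβ).2.2 hγ)
    · exact ⟨0, fun h => absurd h hi⟩
  choose F hF using step
  refine ⟨fun i hi => hi.1, ?_, ?_⟩
  · -- unboundedness
    intro a₀ ha₀
    obtain ⟨seq, hs0, hsS⟩ : ∃ s : ℕ → Ordinal, s 0 = a₀ ∧ ∀ n, s (n + 1) = F (s n) :=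
      ⟨fun n => Nat.rec a₀ (fun _ ih => F ih) n, rfl, fun _ => rfl⟩
    have hinv : ∀ n, seq n < lam.ord := by
      intro n
      induction n with
      | zero => rw [hs0]; exact ha₀
      | succ n ih => rw [hsS]; exact (hF _ ih).2.1
    have hsm : ∀ n, seq n < seq (n + 1) := fun n => by rw [hsS]; exact (hF _ (hinv n)).1
    have hmn : Monotone seq := monotone_nat_of_le_succ fun n => (hsm n).le
    have hbdd : BddAbove (Set.range seq) := ⟨lam.ord, by rintro _ ⟨n, rfl⟩; exact (hinv n).le⟩
    set o := ⨆ n, seq n with hodef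
    have ho : o < lam.ord :=
      Cardinal.iSup_lt_ord_of_isRegular hreg (by rw [Cardinal.mk_nat]; exact hunc) hinv
    have hle : ∀ n, seq n ≤ o := fun n => le_ciSup hbdd n
    have hexists : ∀ b < o, ∃ n, b < seq n := fun b hb => (lt_ciSup_iff hbdd).mp hb
    have holim : Order.IsSuccLimit o := by
      rw [Ordinal.isSuccLimit_iff, Order.isSuccPrelimit_iff_succ_lt]
      constructor
      · intro h0
        have := (hsm 0).trans_le (hle 1)
        rw [h0] at this
        exact absurd this (by simp)
      · intro b hb
        obtain ⟨n, hn⟩ := hexists b hb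
        exact (Order.succ_le_of_lt hn).trans_lt ((hsm n).trans_le (hle (n + 1)))
    -- key step properties
    have hstep : ∀ n β, β ∈ u a (seq n) →
        u β (seq n) ⊆ u a (seq (n + 1)) ∧ u a (seq n) ∩ Set.Iio β ⊆ u β (seq (n + 1)) := by
      intro n β hβ
      have := (hF _ (hinv n)).2.2 β hβ
      rwa [← hsS] at this
    refine ⟨o, ⟨ho, ?_⟩, (hs0 ▸ hle 0 : a₀ ≤ o)⟩
    intro β hβ
    have hβa : β < a := hsub a le_rfl o ho hβ
    have hβmem : ∃ n, β ∈ u a (seq n) := by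
      rw [hcont a le_rfl o ho holim] at hβ
      simp only [Set.mem_iUnion, Set.mem_Iio] at hβ
      obtain ⟨i, hio, hi⟩ := hβ
      obtain ⟨n, hn⟩ := hexists i hio
      exact ⟨n, hmono a le_rfl i (seq n) hn.le (hinv n) hi⟩
    obtain ⟨n, hn⟩ := hβmem
    ext γ
    constructor
    · intro hγ
      rw [hcont β hβa.le o ho holim] at hγ
      simp only [Set.mem_iUnion, Set.mem_Iio] at hγ
      obtain ⟨i, hio, hi⟩ := hγ
      obtain ⟨m, hm⟩ := hexists i hio
      set k := max n m with hk
      have hβk : β ∈ u a (seq k) :=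
        hmono a le_rfl (seq n) (seq k) (hmn (le_max_left n m)) (hinv k) hn
      have hγk : γ ∈ u β (seq k) :=
        hmono β hβa.le i (seq k) (hm.le.trans (hmn (le_max_right n m))) (hinv k) hi
      have hγ1 : γ ∈ u a (seq (k + 1)) := (hstep k β hβk).1 hγk
      refine ⟨hmono a le_rfl (seq (k + 1)) o (hle (k + 1)) ho hγ1, ?_⟩
      exact hsub β hβa.le (seq k) (hinv k) hγk
    · rintro ⟨hγo, hγβ⟩
      rw [hcont a le_rfl o ho holim] at hγo
      simp only [Set.mem_iUnion, Set.mem_Iio] at hγo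
      obtain ⟨i, hio, hi⟩ := hγo
      obtain ⟨m, hm⟩ := hexists i hio
      set k := max n m with hk
      have hβk : β ∈ u a (seq k) :=
        hmono a le_rfl (seq n) (seq k) (hmn (le_max_left n m)) (hinv k) hn
      have hγk : γ ∈ u a (seq k) :=
        hmono a le_rfl i (seq k) (hm.le.trans (hmn (le_max_right n m))) (hinv k) hi
      have : γ ∈ u β (seq (k + 1)) := (hstep k β hβk).2 ⟨hγk, hγβ⟩
      exact hmono β hβa.le (seq (k + 1)) o (hle (k + 1)) ho this
  · -- closedness
    intro o ho ho0 H
    have holim : Order.IsSuccLimit o := by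
      rw [Ordinal.isSuccLimit_iff, Order.isSuccPrelimit_iff_succ_lt]
      refine ⟨ho0, fun b hb => ?_⟩
      obtain ⟨c, _, hbc, hco⟩ := H b hb
      exact lt_of_le_of_lt (Order.succ_le_of_lt hbc) hco
    refine ⟨ho, ?_⟩
    intro β hβ
    have hβa : β < a := hsub a le_rfl o ho hβ
    rw [hcont a le_rfl o ho holim] at hβ
    simp only [Set.mem_iUnion, Set.mem_Iio] at hβ
    obtain ⟨i₁, hi₁o, hβi₁⟩ := hβ
    ext γ
    constructor
    · intro hγ
      rw [hcont β hβa.le o ho holim] at hγ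
      simp only [Set.mem_iUnion, Set.mem_Iio] at hγ
      obtain ⟨i₂, hi₂o, hγi₂⟩ := hγ
      obtain ⟨c, hcD, hic, hco⟩ := H (max i₁ i₂) (max_lt hi₁o hi₂o)
      have hcl : c < lam.ord := hco.trans ho
      have hβc : β ∈ u a c :=
        hmono a le_rfl i₁ c ((le_max_left _ _).trans hic.le) hcl hβi₁
      have hγc : γ ∈ u β c :=
        hmono β hβa.le i₂ c ((le_max_right _ _).trans hic.le) hcl hγi₂
      have := hcD.2 β hβc
      rw [this] at hγc
      exact ⟨hmono a le_rfl c o hco.le ho hγc.1, hγc.2⟩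
    · rintro ⟨hγo, hγβ⟩
      rw [hcont a le_rfl o ho holim] at hγo
      simp only [Set.mem_iUnion, Set.mem_Iio] at hγo
      obtain ⟨i₂, hi₂o, hγi₂⟩ := hγo
      obtain ⟨c, hcD, hic, hco⟩ := H (max i₁ i₂) (max_lt hi₁o hi₂o)
      have hcl : c < lam.ord := hco.trans ho
      have hβc : β ∈ u a c :=
        hmono a le_rfl i₁ c ((le_max_left _ _).trans hic.le) hcl hβi₁
      have hγc : γ ∈ u a c :=
        hmono a le_rfl i₂ c ((le_max_right _ _).trans hic.le) hcl hγi₂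
      have heq := hcD.2 β hβc
      have : γ ∈ u β c := by rw [heq]; exact ⟨hγc, hγβ⟩
      exact hmono β hβa.le c o hco.le ho this
end

section
/- There exists a doubly regular (hence regular) filter on every regular infinite cardinal λ: partition λ into λ pairwise disjoint pieces u_i each of size λ, choose a λ-regular filter D_i on each u_i, and let D = {A ⊆ λ : A ∩ u_i ∈ D_i for all but boundedly many i < λ}. Then D is a doubly regular filter on λ. -/
open Cardinal Set

/-- A family of sets indexed by `ι` is *regular* if every finite subfamily has
nonempty intersection, while every infinite subfamily has empty intersection. -/
def RegFam {ι X : Type*} (A : ι → Set X) : Prop :=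
  (∀ s : Finset ι, (⋂ i ∈ s, A i).Nonempty) ∧
  ∀ S : Set ι, S.Infinite → (⋂ i ∈ S, A i) = ∅

/-- `F` is a proper filter on the set `u`. -/
def IsProperFilterOn {X : Type*} (u : Set X) (F : Set (Set X)) : Prop :=
  (∀ A ∈ F, A ⊆ u) ∧ u ∈ F ∧
  (∀ A ∈ F, ∀ B, A ⊆ B → B ⊆ u → B ∈ F) ∧
  (∀ A ∈ F, ∀ B ∈ F, A ∩ B ∈ F) ∧ ∅ ∉ F

/-- `C` is a closed unbounded subset of the linearly ordered type `X`:
it is unbounded, and contains every element which is a (proper) limit of its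
elements from below. -/
def IsClubIn {X : Type*} [LinearOrder X] (C : Set X) : Prop :=
  (∀ a : X, ∃ b ∈ C, a ≤ b) ∧
  ∀ x : X, (∃ y, y < x) → (∀ y < x, ∃ c ∈ C, y < c ∧ c < x) → x ∈ C

/-- A collection `D` of subsets of the cardinal `λ` (represented by
`X = lam.ord.ToType`) is *doubly regular* if there are pairwise disjoint sets
`u i ⊆ λ` (`i < λ`), each of cardinality `λ`, and `λ`-regular proper filters
`F i` on `u i` (i.e. each `F i` contains a regular family of size `λ`), such that
every `A ⊆ λ` with `A ∩ u i ∈ F i` for all but boundedly many `i < λ` belongs to `D`. -/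
def DoublyRegular (lam : Cardinal) (D : Set (Set lam.ord.ToType)) : Prop :=
  ∃ u : lam.ord.ToType → Set lam.ord.ToType,
    ∃ F : lam.ord.ToType → Set (Set lam.ord.ToType),
      (∀ i j, i ≠ j → Disjoint (u i) (u j)) ∧
      (∀ i, Cardinal.mk (u i) = lam) ∧
      (∀ i, IsProperFilterOn (u i) (F i) ∧
        ∃ A : lam.ord.ToType → Set lam.ord.ToType, (∀ β, A β ∈ F i) ∧ RegFam A) ∧
      ∀ A : Set lam.ord.ToType, (∃ b, ∀ i, A ∩ u i ∉ F i → i < b) → A ∈ D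

/-- *Doubly⁺ regular*: as `DoublyRegular`, but with "for all but boundedly many `i`"
replaced by "for a club of `i < λ`". -/
def DoublyPlusRegular (lam : Cardinal) (D : Set (Set lam.ord.ToType)) : Prop :=
  ∃ u : lam.ord.ToType → Set lam.ord.ToType,
    ∃ F : lam.ord.ToType → Set (Set lam.ord.ToType),
      (∀ i j, i ≠ j → Disjoint (u i) (u j)) ∧
      (∀ i, Cardinal.mk (u i) = lam) ∧
      (∀ i, IsProperFilterOn (u i) (F i) ∧
        ∃ A : lam.ord.ToType → Set lam.ord.ToType, (∀ β, A β ∈ F i) ∧ RegFam A) ∧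
      ∀ A : Set lam.ord.ToType,
        (∃ C, IsClubIn C ∧ ∀ i ∈ C, A ∩ u i ∈ F i) → A ∈ D


section Aux

variable {X : Type*} (e : X ≃ X × Finset X)

/-- The `i`-th piece of the partition. -/
def auxU (i : X) : Set X := {x | (e x).1 = i}

/-- Basic sets generating the filter on the `i`-th piece. -/
def auxB (i : X) (t : Finset X) : Set X := {x | (e x).1 = i ∧ ∀ β ∈ t, β ∈ (e x).2}

/-- The filter on the `i`-th piece. -/
def auxF (i : X) : Set (Set X) :=
  {B | B ⊆ auxU e i ∧ ∃ t : Finset X, auxB e i t ⊆ B}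

lemma auxB_mem (i : X) (t : Finset X) : e.symm (i, t) ∈ auxB e i t := by
  constructor <;> simp [auxB]

lemma auxB_subset_u (i : X) (t : Finset X) : auxB e i t ⊆ auxU e i := fun _ hx => hx.1

lemma auxF_filter (i : X) : IsProperFilterOn (auxU e i) (auxF e i) := by
  classical
  refine ⟨fun B hB => hB.1, ⟨subset_rfl, ∅, fun x hx => hx.1⟩, ?_, ?_, ?_⟩
  · rintro A ⟨hAu, t, ht⟩ B hAB hBu
    exact ⟨hBu, t, ht.trans hAB⟩
  · rintro A ⟨hAu, t₁, h₁⟩ B ⟨hBu, t₂, h₂⟩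
    refine ⟨fun x hx => hAu hx.1, t₁ ∪ t₂, fun x hx => ?_⟩
    exact ⟨h₁ ⟨hx.1, fun β hβ => hx.2 β (Finset.mem_union_left _ hβ)⟩,
      h₂ ⟨hx.1, fun β hβ => hx.2 β (Finset.mem_union_right _ hβ)⟩⟩
  · rintro ⟨-, t, ht⟩
    exact Set.notMem_empty _ (ht (auxB_mem e i t))

lemma auxF_regfam [Infinite X] (i : X) :
    ∃ A : X → Set X, (∀ β, A β ∈ auxF e i) ∧ RegFam A := by
  refine ⟨fun β => auxB e i {β}, fun β => ⟨auxB_subset_u e i _, {β}, subset_rfl⟩, ?_, ?_⟩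
  · intro s
    refine ⟨e.symm (i, s), ?_⟩
    simp only [Set.mem_iInter]
    intro β hβ
    refine ⟨by simp, ?_⟩
    intro γ hγ
    simp only [Finset.mem_singleton] at hγ
    subst hγ
    simpa using hβ
  · intro S hS
    rw [Set.eq_empty_iff_forall_notMem]
    intro x hx
    simp only [Set.mem_iInter] at hx
    refine hS (Set.Finite.subset ((e x).2.finite_toSet) fun β hβ => ?_)
    exact (hx β hβ).2 β (Finset.mem_singleton_self β)

lemma auxU_card (i : X) : Cardinal.mk (auxU e i) = Cardinal.mk (Finset X) := by
  refine Cardinal.mk_congr ?_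
  refine ⟨fun x => (e x.1).2, fun s => ⟨e.symm (i, s), by simp [auxU]⟩, ?_, fun s => by simp⟩
  rintro ⟨x, hx⟩
  have hx' : (e x).1 = i := hx
  apply Subtype.ext
  show e.symm (i, (e x).2) = x
  rw [← hx']
  simp

/-- The doubly regular filter. -/
def auxD [LinearOrder X] : Set (Set X) :=
  {A | ∃ b, ∀ i, A ∩ auxU e i ∉ auxF e i → i < b}

end Aux

/-- On every regular infinite cardinal `λ` there exists a doubly regular — and hence
`λ`-regular — proper filter `D`: partition `λ` into `λ` pieces of size `λ`, take a
`λ`-regular filter on each piece, and let `D` consist of those `A ⊆ λ` with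
`A ∩ u i ∈ D i` for all but boundedly many `i < λ`. -/

theorem stmt10 (lam : Cardinal) (hreg : lam.IsRegular) :
    ∃ D : Set (Set lam.ord.ToType),
      IsProperFilterOn (Set.univ : Set lam.ord.ToType) D ∧
      DoublyRegular lam D ∧
      ∃ A : lam.ord.ToType → Set lam.ord.ToType, (∀ β, A β ∈ D) ∧ RegFam A := by
  have hmk : Cardinal.mk lam.ord.ToType = lam := by
    rw [Cardinal.mk_toType, Cardinal.card_ord]
  have hinf : ℵ₀ ≤ Cardinal.mk lam.ord.ToType := by rw [hmk]; exact hreg.aleph0_le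
  haveI : Infinite lam.ord.ToType := Cardinal.infinite_iff.mpr hinf
  obtain ⟨e⟩ : Nonempty (lam.ord.ToType ≃ lam.ord.ToType × Finset lam.ord.ToType) := by
    rw [← Cardinal.eq, Cardinal.mk_prod, Cardinal.mk_finset_of_infinite]
    simp only [Cardinal.lift_id]
    exact (Cardinal.mul_eq_self hinf).symm
  have hFi := auxF_filter e
  obtain ⟨b₀⟩ : Nonempty lam.ord.ToType := inferInstance
  refine ⟨auxD e, ?_, ?_, ?_⟩
  · -- D is a proper filter on univ
    refine ⟨fun A _ => Set.subset_univ A, ⟨b₀, fun i hi => ?_⟩, ?_, ?_, ?_⟩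
    · exact absurd (by rw [Set.univ_inter]; exact (hFi i).2.1) hi
    · rintro A ⟨b, hb⟩ B hAB -
      refine ⟨b, fun i hi => hb i fun hA => hi ?_⟩
      exact (hFi i).2.2.1 _ hA _ (Set.inter_subset_inter_left _ hAB)
        (Set.inter_subset_right)
    · rintro A ⟨b₁, h₁⟩ B ⟨b₂, h₂⟩
      refine ⟨max b₁ b₂, fun i hi => ?_⟩
      by_cases hA : A ∩ auxU e i ∈ auxF e i
      · by_cases hB : B ∩ auxU e i ∈ auxF e i
        · exfalso
          apply hi
          have := (hFi i).2.2.2.1 _ hA _ hB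
          rwa [← Set.inter_inter_distrib_right] at this
        · exact lt_of_lt_of_le (h₂ i hB) (le_max_right _ _)
      · exact lt_of_lt_of_le (h₁ i hA) (le_max_left _ _)
    · rintro ⟨b, hb⟩
      have : b < b := hb b (by rw [Set.empty_inter]; exact (hFi b).2.2.2.2)
      exact lt_irrefl b this
  · -- doubly regular
    refine ⟨auxU e, auxF e, ?_, ?_, fun i => ⟨hFi i, auxF_regfam e i⟩, fun A h => h⟩
    · intro i j hij
      rw [Set.disjoint_left]
      intro x hx hx'
      exact hij (hx.symm.trans hx')
    · intro i
      rw [auxU_card, Cardinal.mk_finset_of_infinite, hmk]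
  · -- regular family in D
    refine ⟨fun β => {x | β ∈ (e x).2}, fun β => ⟨b₀, fun i hi => ?_⟩, ?_, ?_⟩
    · refine absurd ?_ hi
      refine ⟨fun x hx => hx.2, {β}, fun x hx => ?_⟩
      exact ⟨hx.2 β (Finset.mem_singleton_self β), hx.1⟩
    · intro s
      refine ⟨e.symm (b₀, s), ?_⟩
      simp only [Set.mem_iInter, Set.mem_setOf_eq]
      intro β hβ
      simpa using hβ
    · intro S hS
      rw [Set.eq_empty_iff_forall_notMem]
      intro x hx
      simp only [Set.mem_iInter, Set.mem_setOf_eq] at hx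
      exact hS (Set.Finite.subset ((e x).2.finite_toSet) fun β hβ => hx β hβ)
end

section
/- (Erdős–Rado application) Let λ be a cardinal of countable cofinality with λ > 2^{ℵ₀}, let C ⊆ λ be a countable cofinal subset, and let ⟨s_ξ : ξ < (2^{ℵ₀})⁺⟩ be pairwise distinct subsets of λ. Then there exist i ∈ C and a countably infinite set H of indices such that for all distinct ξ, ζ ∈ H, s_ξ ∩ i ≠ s_ζ ∩ i; in fact all the intersections s_ξ ∩ i for ξ ∈ H are pairwise distinct. -/
open Cardinal Set

/-- (Erdős–Rado application.)  Let `λ` be a cardinal of countable cofinality with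
`λ > 2^ℵ₀` (represented by the type `lam.ord.toType` of ordinals below `λ`), let
`C ⊆ λ` be a countable cofinal subset, and let `⟨s ξ : ξ < (2^ℵ₀)⁺⟩` be pairwise
distinct subsets of `λ`.  Then there are `i ∈ C` and a countably infinite set `H`
of indices such that the traces `s ξ ∩ i = {β ∈ s ξ : β < i}`, for `ξ ∈ H`, are
pairwise distinct. -/
theorem stmt15 (lam : Cardinal) (hcof : lam.ord.cof = ℵ₀)
    (hbig : (2 : Cardinal) ^ ℵ₀ < lam)
    (C : Set lam.ord.ToType) (hCc : C.Countable)
    (hCcof : ∀ a : lam.ord.ToType, ∃ c ∈ C, a ≤ c)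
    (s : (Order.succ ((2 : Cardinal) ^ ℵ₀)).ord.ToType → Set lam.ord.ToType)
    (hs : Function.Injective s) :
    ∃ i ∈ C, ∃ H : Set (Order.succ ((2 : Cardinal) ^ ℵ₀)).ord.ToType,
      H.Countable ∧ H.Infinite ∧
      ∀ ξ ∈ H, ∀ ζ ∈ H, ξ ≠ ζ → s ξ ∩ Set.Iio i ≠ s ζ ∩ Set.Iio i := by
  classical
  haveI : NoMaxOrder lam.ord.ToType :=
    Cardinal.noMaxOrder (le_of_lt (lt_of_lt_of_le (Cardinal.cantor ℵ₀) hbig.le))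
  -- Step A: some i ∈ C has infinite trace range
  have key : ∃ i ∈ C, (Set.range fun ξ => s ξ ∩ Set.Iio i).Infinite := by
    by_contra hfin
    push_neg at hfin
    -- the combined trace map is injective
    have Finj : Function.Injective
        (fun (ξ : (Order.succ ((2 : Cardinal) ^ ℵ₀)).ord.ToType) (c : C) =>
          s ξ ∩ Set.Iio c.1) := by
      intro ξ ζ h
      apply hs
      ext β
      obtain ⟨d, hd⟩ := exists_gt β
      obtain ⟨c, hcC, hdc⟩ := hCcof d
      have hβc : β < c := lt_of_lt_of_le hd hdc
      have h' := congrFun h ⟨c, hcC⟩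
      dsimp only at h'
      constructor
      · intro hb
        have hm : β ∈ s ζ ∩ Set.Iio c := by rw [← h']; exact ⟨hb, hβc⟩
        exact hm.1
      · intro hb
        have hm : β ∈ s ξ ∩ Set.Iio c := by rw [h']; exact ⟨hb, hβc⟩
        exact hm.1
    -- embed into product of finite ranges
    have Ginj : Function.Injective
        (fun (ξ : (Order.succ ((2 : Cardinal) ^ ℵ₀)).ord.ToType) (c : C) =>
          (⟨s ξ ∩ Set.Iio c.1, Set.mem_range_self ξ⟩ :
            ↥(Set.range fun ζ => s ζ ∩ Set.Iio c.1))) := by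
      intro ξ ζ h
      apply Finj
      funext c
      exact congrArg Subtype.val (congrFun h c)
    have h1 := Cardinal.lift_mk_le'.mpr ⟨⟨_, Ginj⟩⟩
    rw [Cardinal.mk_pi, Cardinal.mk_toType, Cardinal.card_ord] at h1
    have h2 : (Cardinal.prod fun c : C => #↥(Set.range fun ζ => s ζ ∩ Set.Iio c.1)) ≤
        (2 : Cardinal) ^ ℵ₀ := by
      calc (Cardinal.prod fun c : C => #↥(Set.range fun ζ => s ζ ∩ Set.Iio c.1))
          ≤ Cardinal.prod fun _ : C => ℵ₀ := by
            apply Cardinal.prod_le_prod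
            intro c
            haveI := (hfin c.1 c.2).countable.to_subtype
            exact Cardinal.mk_le_aleph0
        _ = ℵ₀ ^ #C := Cardinal.prod_const' _ _
        _ ≤ ℵ₀ ^ ℵ₀ := by
            haveI := hCc.to_subtype
            exact Cardinal.power_le_power_left Cardinal.aleph0_ne_zero
              Cardinal.mk_le_aleph0
        _ = 2 ^ ℵ₀ := Cardinal.power_self_eq le_rfl
    have h3 := h1.trans (Cardinal.lift_le.mpr h2)
    simp only [Cardinal.lift_succ, Cardinal.lift_power, Cardinal.lift_two,
      Cardinal.lift_aleph0] at h3
    exact absurd (lt_of_lt_of_le (Order.lt_succ _) h3) (lt_irrefl _)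
  obtain ⟨i, hiC, hinf⟩ := key
  refine ⟨i, hiC, ?_⟩
  -- Step B: pick preimages of an ℕ-embedding into the range
  let e := hinf.natEmbedding
  have hchoice : ∀ n : ℕ, ∃ ξ, s ξ ∩ Set.Iio i = (e n).1 := fun n => (e n).2
  choose h hh using hchoice
  have hinj : Function.Injective h := by
    intro n m hnm
    have : (e n).1 = (e m).1 := by rw [← hh n, ← hh m, hnm]
    exact e.injective (Subtype.ext this)
  refine ⟨Set.range h, Set.countable_range h,
    Set.infinite_range_of_injective hinj, ?_⟩
  rintro ξ ⟨n, rfl⟩ ζ ⟨m, rfl⟩ hne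
  have hnm : n ≠ m := fun hEq => hne (hEq ▸ rfl)
  rw [hh n, hh m]
  intro hEq
  exact hnm (e.injective (Subtype.ext hEq))
end

section
/- Let λ be a regular cardinal and let 𝒜¹ be a regular family on λ contained in a family 𝒟 ⊆ 𝒫(λ) closed under finite intersections with ∅ ∉ 𝒟. Suppose E is an equivalence relation on λ such that for every S ⊆ λ with |S| < λ, the union ⋃_{ε∈S}[ε]_E contains no member of 𝒟 modulo small sets (precisely: for every B ∈ 𝒟 and every set W of size < λ, B ⊄ (⋃_{ε∈S}[ε]_E) ∪ W). Then for any enumeration ⟨C_i : i < λ⟩ of a subfamily of 𝒟 of size ≤ λ and any system of regular families ⟨u_γ : γ ∈ [i]_E⟩ on each E-class, there exist pairwise E-inequivalent elements ε_i (i < λ) and elements γ_i with γ_i E ε_i such that u_{γ_i} does not contain C_i ∩ [ε_i]_E. -/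
open Cardinal Set

/-- (Subclaim of Theorem 7.)  Let `λ` be a regular cardinal (represented by
`lam.ord.ToType`) and let `𝒟` be a collection of subsets of `λ`, closed under binary
intersections, with `∅ ∉ 𝒟`, containing a regular family of size `λ`.  Let `E` be an
equivalence relation on `λ` whose classes are infinite, such that no member of `𝒟` is
covered by the union of fewer than `λ` many `E`-classes together with a set of size
`< λ`.  Then for every `λ`-enumeration `⟨C i : i < λ⟩` of members of `𝒟` and every
system `u` assigning to each class a regular family `⟨u γ : γ ∈ [ε]_E⟩` of subsets of
that class, there are pairwise `E`-inequivalent elements `ε i` and elements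
`γ i ∼_E ε i` (`i < λ`) with `u (γ i) ⊉ C i ∩ [ε i]_E`. -/
theorem stmt18 (lam : Cardinal) (hreg : lam.IsRegular)
    (𝒟 : Set (Set lam.ord.ToType))
    (hinter : ∀ A ∈ 𝒟, ∀ B ∈ 𝒟, A ∩ B ∈ 𝒟)
    (hproper : ∅ ∉ 𝒟)
    (hregfam : ∃ A : lam.ord.ToType → Set lam.ord.ToType,
      (∀ β, A β ∈ 𝒟) ∧ RegFam A)
    (E : lam.ord.ToType → lam.ord.ToType → Prop) (hE : Equivalence E)
    (hclassinf : ∀ i, {γ | E γ i}.Infinite)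
    (hnull : ∀ S : Set lam.ord.ToType, #S < lam →
      ∀ B ∈ 𝒟, ∀ W : Set lam.ord.ToType, #W < lam →
        ¬ B ⊆ (⋃ ε ∈ S, {x | E x ε}) ∪ W)
    (C : lam.ord.ToType → Set lam.ord.ToType) (hC : ∀ i, C i ∈ 𝒟)
    (u : lam.ord.ToType → Set lam.ord.ToType)
    (husub : ∀ ε γ, E γ ε → u γ ⊆ {x | E x ε})
    (hureg : ∀ ε, RegFam (fun γ : {γ // E γ ε} => u γ)) :
    ∃ ε γ : lam.ord.ToType → lam.ord.ToType,
      (∀ i j, i ≠ j → ¬ E (ε i) (ε j)) ∧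
      (∀ i, E (γ i) (ε i)) ∧
      ∀ i, ¬ (C i ∩ {x | E x (ε i)} ⊆ u (γ i)) := by
  have key : ∀ (i : lam.ord.ToType) (S : Set lam.ord.ToType), #S < lam →
      ∃ ξ, ξ ∈ C i ∧ ∀ e ∈ S, ¬ E ξ e := by
    intro i S hS
    have h0 : (#(∅ : Set lam.ord.ToType)) < lam := by
      simpa using hreg.pos
    have h1 := hnull S hS (C i) (hC i) ∅ h0
    rw [Set.not_subset] at h1
    obtain ⟨ξ, hξC, hξ⟩ := h1
    refine ⟨ξ, hξC, fun e he hEe => hξ ?_⟩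
    exact Or.inl (Set.mem_biUnion he hEe)
  have wf : WellFounded ((· < ·) : lam.ord.ToType → lam.ord.ToType → Prop) :=
    IsWellFounded.wf
  let F : ∀ i : lam.ord.ToType, (∀ j : lam.ord.ToType, j < i → lam.ord.ToType) →
      lam.ord.ToType := fun i IH =>
    Classical.choose (key i (Set.range fun j : Set.Iio i => IH j j.2)
      ((Cardinal.mk_range_le).trans_lt (Cardinal.mk_Iio_ord_toType i)))
  let ε : lam.ord.ToType → lam.ord.ToType := wf.fix F
  have hεspec : ∀ i, ε i ∈ C i ∧ ∀ j, j < i → ¬ E (ε i) (ε j) := by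
    intro i
    have heq : ε i = Classical.choose (key i (Set.range fun j : Set.Iio i => ε j)
        ((Cardinal.mk_range_le).trans_lt (Cardinal.mk_Iio_ord_toType i))) :=
      wf.fix_eq F i
    have hspec := Classical.choose_spec (key i
      (Set.range fun j : Set.Iio i => ε j)
      ((Cardinal.mk_range_le).trans_lt (Cardinal.mk_Iio_ord_toType i)))
    rw [← heq] at hspec
    exact ⟨hspec.1, fun j hj => hspec.2 (ε j) ⟨⟨j, hj⟩, rfl⟩⟩
  have keyγ : ∀ i, ∃ g, E g (ε i) ∧ ε i ∉ u g := by
    intro i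
    have hTfin : {γ : {γ // E γ (ε i)} | ε i ∈ u γ}.Finite := by
      by_contra hinf
      have hempty := (hureg (ε i)).2 _ hinf
      have hmem : ε i ∈ ⋂ g ∈ {γ : {γ // E γ (ε i)} | ε i ∈ u γ},
          u (g : {γ // E γ (ε i)}) :=
        Set.mem_biInter fun g hg => hg
      rw [hempty] at hmem
      exact hmem
    have : Infinite {γ // E γ (ε i)} := (hclassinf (ε i)).to_subtype
    obtain ⟨g, hg⟩ := hTfin.infinite_compl.nonempty
    exact ⟨g, g.2, hg⟩
  refine ⟨ε, fun i => Classical.choose (keyγ i), ?_, ?_, ?_⟩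
  · intro i j hij hEij
    rcases lt_or_gt_of_ne hij with h | h
    · exact (hεspec j).2 i h (hE.symm hEij)
    · exact (hεspec i).2 j h hEij
  · exact fun i => (Classical.choose_spec (keyγ i)).1
  · intro i hsub
    exact (Classical.choose_spec (keyγ i)).2
      (hsub ⟨(hεspec i).1, hE.refl (ε i)⟩)
end

section
/- If D₁ is a doubly regular ultrafilter on a regular cardinal λ (witnessed by disjoint sets u_i ⊆ λ of size λ and λ-regular filters F_i on u_i) and D₂ is any ultrafilter on ω, then the product ultrafilter D₁ × D₂ on λ × ω is doubly regular (after identifying λ × ω with λ), witnessed by the sets u_i × ω and the filters F_i* on u_i × ω generated by {A × ω : A ∈ F_i}. -/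
open Cardinal Set

/-- The filter on `u ×ˢ univ` generated by the sets `A × ω`, `A ∈ F`. -/
def prodFilter {X : Type*} (u : Set X) (F : Set (Set X)) : Set (Set (X × ℕ)) :=
  {B | B ⊆ u ×ˢ (Set.univ : Set ℕ) ∧ ∃ A ∈ F, A ×ˢ (Set.univ : Set ℕ) ⊆ B}

/-- Let `D₁` be a doubly regular ultrafilter on the regular cardinal `λ` (represented
by `lam.ord.ToType`), witnessed by pairwise disjoint sets `u i` of size `λ` and
`λ`-regular proper filters `F i` on `u i`, and let `D₂` be an ultrafilter on `ω`.
Then the product ultrafilter `D₁ × D₂` on `λ × ω` (a set of size `λ`) is doubly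
regular, witnessed by the sets `u i × ω` and the filters `F* i = prodFilter (u i) (F i)`
generated by `{A × ω : A ∈ F i}`: these sets are pairwise disjoint of cardinality `λ`,
each `F* i` is a `λ`-regular proper filter on `u i × ω`, and every `S ⊆ λ × ω` with
`S ∩ (u i × ω) ∈ F* i` for all but boundedly many `i < λ` belongs to `D₁ × D₂`. -/
theorem stmt19 (lam : Cardinal) (hreg : lam.IsRegular)
    (D₁ : Set (Set lam.ord.ToType))
    (hD₁ : IsProperFilterOn (Set.univ : Set lam.ord.ToType) D₁)
    (hD₁ultra : ∀ B : Set lam.ord.ToType, B ∈ D₁ ∨ Bᶜ ∈ D₁)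
    (u : lam.ord.ToType → Set lam.ord.ToType)
    (hdisj : ∀ i j, i ≠ j → Disjoint (u i) (u j))
    (hcard : ∀ i, #(u i) = lam)
    (F : lam.ord.ToType → Set (Set lam.ord.ToType))
    (hF : ∀ i, IsProperFilterOn (u i) (F i) ∧
      ∃ A : lam.ord.ToType → Set lam.ord.ToType, (∀ β, A β ∈ F i) ∧ RegFam A)
    (hDR : ∀ A : Set lam.ord.ToType,
      (∃ b, ∀ i, A ∩ u i ∉ F i → i < b) → A ∈ D₁)
    (D₂ : Set (Set ℕ))
    (hD₂ : IsProperFilterOn (Set.univ : Set ℕ) D₂)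
    (hD₂ultra : ∀ B : Set ℕ, B ∈ D₂ ∨ Bᶜ ∈ D₂) :
    (∀ i j, i ≠ j →
      Disjoint (u i ×ˢ (Set.univ : Set ℕ)) (u j ×ˢ (Set.univ : Set ℕ))) ∧
    (∀ i, #↥(u i ×ˢ (Set.univ : Set ℕ)) = lam) ∧
    (∀ i, IsProperFilterOn (u i ×ˢ (Set.univ : Set ℕ)) (prodFilter (u i) (F i)) ∧
      ∃ A : lam.ord.ToType → Set (lam.ord.ToType × ℕ),
        (∀ β, A β ∈ prodFilter (u i) (F i)) ∧ RegFam A) ∧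
    ∀ S : Set (lam.ord.ToType × ℕ),
      (∃ b, ∀ i, S ∩ (u i ×ˢ (Set.univ : Set ℕ)) ∉ prodFilter (u i) (F i) → i < b) →
      {i | {n | (i, n) ∈ S} ∈ D₂} ∈ D₁  := by
  have hlaminf : ℵ₀ ≤ lam := hreg.aleph0_le
  refine ⟨?_, ?_, ?_, ?_⟩
  · intro i j hij
    exact (Set.disjoint_prod).2 (Or.inl (hdisj i j hij))
  · intro i
    have h1 := Cardinal.mk_congr (Equiv.Set.prod (u i) (Set.univ : Set ℕ))
    simp only [Cardinal.mk_prod, Cardinal.mk_univ, Cardinal.mk_nat,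
      Cardinal.lift_aleph0, Cardinal.lift_id, Cardinal.lift_uzero, hcard i] at h1
    rw [h1]
    exact Cardinal.mul_eq_left hlaminf hlaminf Cardinal.aleph0_ne_zero
  · intro i
    obtain ⟨⟨hsub, huF, hup, hint, hne⟩, A, hAF, hAreg⟩ := hF i
    constructor
    · refine ⟨?_, ?_, ?_, ?_, ?_⟩
      · intro B hB; exact hB.1
      · exact ⟨subset_rfl, u i, huF, subset_rfl⟩
      · rintro B ⟨hBsub, A', hA', hA'B⟩ C hBC hCsub
        exact ⟨hCsub, A', hA', hA'B.trans hBC⟩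
      · rintro B ⟨hBsub, A', hA', hA'B⟩ C ⟨hCsub, A'', hA'', hA''C⟩
        refine ⟨(Set.inter_subset_left).trans hBsub, A' ∩ A'', hint _ hA' _ hA'', ?_⟩
        rintro ⟨x, n⟩ ⟨⟨hx1, hx2⟩, -⟩
        exact ⟨hA'B ⟨hx1, Set.mem_univ _⟩, hA''C ⟨hx2, Set.mem_univ _⟩⟩
      · rintro ⟨_, A', hA', hA'sub⟩
        have : A' = ∅ := by
          by_contra h
          obtain ⟨x, hx⟩ := Set.nonempty_iff_ne_empty.2 h
          exact absurd (hA'sub (Set.mem_prod.2 ⟨hx, Set.mem_univ _⟩ : ((x, 0) : _ × ℕ) ∈ _)) (by simp)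
        exact hne (this ▸ hA')
    · refine ⟨fun β => A β ×ˢ (Set.univ : Set ℕ), fun β =>
        ⟨Set.prod_mono (hsub _ (hAF β)) subset_rfl, A β, hAF β, subset_rfl⟩, ?_, ?_⟩
      · intro s
        obtain ⟨x, hx⟩ := hAreg.1 s
        refine ⟨(x, 0), ?_⟩
        simp only [Set.mem_iInter] at hx ⊢
        intro j hj; exact ⟨hx j hj, Set.mem_univ 0⟩
      · intro S hS
        ext ⟨x, n⟩
        simp only [Set.mem_iInter, Set.mem_prod, Set.mem_empty_iff_false, iff_false,
          not_forall]
        by_contra h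
        push_neg at h
        have : x ∈ ⋂ j ∈ S, A j := Set.mem_iInter₂.2 fun j hj => (h j hj).1
        rw [hAreg.2 S hS] at this
        exact this
  · rintro S ⟨b, hb⟩
    apply hDR
    refine ⟨b, fun i hi => ?_⟩
    by_contra hib
    push_neg at hib
    apply hi
    obtain ⟨⟨hsub, huF, hup, hint, hne⟩, -⟩ := hF i
    have hSi : S ∩ u i ×ˢ (Set.univ : Set ℕ) ∈ prodFilter (u i) (F i) := by
      by_contra h
      exact absurd (hb i h) (not_lt.2 hib)
    obtain ⟨-, A', hA', hA'sub⟩ := hSi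
    refine hup A' hA' _ ?_ (Set.inter_subset_right)
    intro x hx
    refine ⟨show {n | (x, n) ∈ S} ∈ D₂ from ?_, hsub _ hA' hx⟩
    have : ({n | (x, n) ∈ S} : Set ℕ) = Set.univ := by
      ext n
      simp only [Set.mem_setOf_eq, Set.mem_univ, iff_true]
      exact (hA'sub ⟨hx, Set.mem_univ n⟩).1
    rw [this]
    exact hD₂.2.1
end
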